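/- Let k be an infinite field and let W ⊂ P⁶ be the cubic hypersurface defined by ξ²c₂ − (b₀² − 4a₀c₀)c₂ − a₀c₁² + b₀c₁d₀ − d₀²c₀ = 0 in homogeneous coordinates (a₀, b₀, c₀, c₁, c₂, d₀, ξ). Then the point p = [1:0:0:0:0:0:0] lies on W and is a singular (double) point of W: the defining cubic has multiplicity exactly 2 at p. Consequently projection from p gives a birational map W ⇢ P⁵, so W is rational over k and its k-points are Zariski dense. -/

import Mathlib

open MvPolynomial

/-- The cubic form `ξ²c₂ − (b₀² − 4a₀c₀)c₂ − a₀c₁² + b₀c₁d₀ − d₀²c₀` in the 7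
homogeneous coordinates `(a₀, b₀, c₀, c₁, c₂, d₀, ξ)` of `ℙ⁶`, with variables
indexed `0 ↦ a₀, 1 ↦ b₀, 2 ↦ c₀, 3 ↦ c₁, 4 ↦ c₂, 5 ↦ d₀, 6 ↦ ξ`. -/
noncomputable def cubicW (k : Type*) [Field k] : MvPolynomial (Fin 7) k :=
  X 6 ^ 2 * X 4 - (X 1 ^ 2 - 4 * X 0 * X 2) * X 4 - X 0 * X 3 ^ 2 +
    X 1 * X 3 * X 5 - X 5 ^ 2 * X 2

/-- The quadratic coefficient `4c₀c₂ − c₁²` (in variables `b₀,c₀,c₁,c₂,d₀,ξ ↦ 0..5`). -/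
noncomputable def auxQ (k : Type*) [Field k] : MvPolynomial (Fin 6) k :=
  4 * X 1 * X 3 - X 2 ^ 2

/-- The constant coefficient `ξ²c₂ − b₀²c₂ + b₀c₁d₀ − d₀²c₀`. -/
noncomputable def auxR (k : Type*) [Field k] : MvPolynomial (Fin 6) k :=
  X 5 ^ 2 * X 3 - X 0 ^ 2 * X 3 + X 0 * X 2 * X 4 - X 4 ^ 2 * X 1

noncomputable def auxQ5 (k : Type*) [Field k] : MvPolynomial (Fin 5) k :=
  4 * X 0 * X 2 - X 1 ^ 2

lemma auxQ5_ne {k : Type*} [Field k] : auxQ5 k ≠ 0 := by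
  intro h
  have := congrArg (eval (fun i => if i = 1 then (1:k) else 0)) h
  simp [auxQ5] at this

lemma auxQ_ne {k : Type*} [Field k] : auxQ k ≠ 0 := by
  intro h
  have := congrArg (eval (fun i => if i = 2 then (1:k) else 0)) h
  simp [auxQ] at this

lemma prime_X2_fin5 {k : Type*} [Field k] : Prime (X 2 : MvPolynomial (Fin 5) k) := by
  let e := (renameEquiv k (Equiv.swap (2 : Fin 5) 0)).trans (finSuccEquiv k 4)
  rw [← MulEquiv.prime_iff e.toRingEquiv.toMulEquiv]
  have he : e (X 2) = Polynomial.X := by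
    simp [e, renameEquiv_apply, rename_X, Equiv.swap_apply_left, finSuccEquiv_X_zero]
  rw [show e.toRingEquiv.toMulEquiv (X 2 : MvPolynomial (Fin 5) k) = e (X 2) from rfl, he]
  exact Polynomial.prime_X

/-- any common divisor of `auxQ` and `auxR` is a unit. -/
lemma aux_relprime {k : Type*} [Field k] (d : MvPolynomial (Fin 6) k)
    (hdQ : d ∣ auxQ k) (hdR : d ∣ auxR k) : IsUnit d := by
  have h1 : (1 : Fin 6) = Fin.succ 0 := rfl
  have h2 : (2 : Fin 6) = Fin.succ 1 := rfl
  have h3 : (3 : Fin 6) = Fin.succ 2 := rfl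
  have h4 : (4 : Fin 6) = Fin.succ 3 := rfl
  have h5 : (5 : Fin 6) = Fin.succ 4 := rfl
  have hQ5 : finSuccEquiv k 5 (auxQ k) = Polynomial.C (auxQ5 k) := by
    rw [auxQ, h1, h2, h3, auxQ5]
    simp only [map_sub, map_add, map_mul, map_pow, map_ofNat, finSuccEquiv_X_zero,
      finSuccEquiv_X_succ]
  have hR5 : finSuccEquiv k 5 (auxR k) =
      Polynomial.C (X 4 ^ 2 * X 2 - X 3 ^ 2 * X 0) +
        Polynomial.C (X 1 * X 3) * Polynomial.X - Polynomial.C (X 2) * Polynomial.X ^ 2 := by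
    rw [auxR, h1, h2, h3, h4, h5]
    simp only [map_sub, map_add, map_mul, map_pow, map_ofNat, finSuccEquiv_X_zero,
      finSuccEquiv_X_succ]
    ring
  set e5 := finSuccEquiv k 5
  obtain ⟨u, hu⟩ := hdQ
  have hu5 : Polynomial.C (auxQ5 k) = e5 d * e5 u := by
    rw [← hQ5, hu, map_mul]
  have hd0 : e5 d ≠ 0 := by
    intro h
    rw [h, zero_mul] at hu5
    exact auxQ5_ne (by simpa using hu5)
  have hu0 : e5 u ≠ 0 := by
    intro h
    rw [h, mul_zero] at hu5
    exact auxQ5_ne (by simpa using hu5)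
  have hdeg : (e5 d).natDegree = 0 := by
    have := Polynomial.natDegree_mul hd0 hu0
    rw [← hu5, Polynomial.natDegree_C] at this
    omega
  have hdC : e5 d = Polynomial.C ((e5 d).coeff 0) := Polynomial.eq_C_of_natDegree_eq_zero hdeg
  set d5 := (e5 d).coeff 0 with hd5def
  have hd5Q : d5 ∣ auxQ5 k := by
    have h' : Polynomial.C d5 ∣ Polynomial.C (auxQ5 k) := by
      rw [← hdC, hu5]; exact ⟨e5 u, rfl⟩
    have := (Polynomial.C_dvd_iff_dvd_coeff _ _).mp h' 0
    simpa using this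
  have hd5X : d5 ∣ (X 2 : MvPolynomial (Fin 5) k) := by
    have hdvd : Polynomial.C d5 ∣ e5 (auxR k) := by rw [← hdC]; exact map_dvd _ hdR
    have := (Polynomial.C_dvd_iff_dvd_coeff _ _).mp hdvd 2
    rw [hR5] at this
    simp only [Polynomial.coeff_sub, Polynomial.coeff_add, Polynomial.coeff_C,
      Polynomial.coeff_C_mul, Polynomial.coeff_X_pow, Polynomial.coeff_X] at this
    norm_num at this
    exact this
  have hunit5 : IsUnit d5 := by
    obtain ⟨c, hc⟩ := hd5X
    rcases prime_X2_fin5.irreducible.isUnit_or_isUnit hc with h | h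
    · exact h
    · exfalso
      have hX2d : (X 2 : MvPolynomial (Fin 5) k) ∣ auxQ5 k := by
        obtain ⟨cu, hcu⟩ := h.exists_right_inv
        refine dvd_trans ⟨cu, ?_⟩ hd5Q
        rw [hc]
        calc d5 = d5 * (c * cu) := by rw [hcu, mul_one]
          _ = d5 * c * cu := by ring
      obtain ⟨t, ht⟩ := hX2d
      have := congrArg (eval (fun i => if i = 0 then (1:k) else if i = 1 then 1 else 0)) ht
      simp [auxQ5] at this
  have hCunit : IsUnit (e5 d) := by
    rw [hdC]
    exact hunit5.map (Polynomial.C : MvPolynomial (Fin 5) k →+* Polynomial (MvPolynomial (Fin 5) k))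
  have := hCunit.map e5.symm.toRingEquiv.toRingHom
  simpa using this

lemma pdiv {A : Type*} [CommRing A] (Q R : A) :
    ∀ (N : ℕ) (g : Polynomial A), g.natDegree ≤ N →
      ∃ q s, Polynomial.C Q ^ N * g =
        q * (Polynomial.C Q * Polynomial.X + Polynomial.C R) + Polynomial.C s := by
  intro N
  induction N with
  | zero =>
    intro g hg
    refine ⟨0, g.coeff 0, ?_⟩
    rw [pow_zero, one_mul, zero_mul, zero_add]
    exact Polynomial.eq_C_of_natDegree_le_zero hg
  | succ N ih =>
    intro g hg
    set a := g.coeff (N + 1) with ha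
    set L : Polynomial A := Polynomial.C Q * Polynomial.X + Polynomial.C R with hL
    have hsplit : Polynomial.C a * Polynomial.X ^ N * L =
        Polynomial.C (a * Q) * Polynomial.X ^ (N + 1) + Polynomial.C (a * R) * Polynomial.X ^ N := by
      simp only [hL, map_mul]; ring
    have hh : (Polynomial.C Q * g - Polynomial.C a * Polynomial.X ^ N * L).natDegree ≤ N := by
      rw [Polynomial.natDegree_le_iff_coeff_eq_zero]
      intro m hm
      rw [Polynomial.coeff_sub, hsplit, Polynomial.coeff_add, Polynomial.coeff_C_mul,
        Polynomial.coeff_C_mul, Polynomial.coeff_C_mul, Polynomial.coeff_X_pow,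
        Polynomial.coeff_X_pow]
      by_cases hm1 : m = N + 1
      · subst hm1
        simp [← ha, mul_comm]
      · have hg1 : g.coeff m = 0 :=
          Polynomial.coeff_eq_zero_of_natDegree_lt (lt_of_le_of_lt hg (by omega))
        have h2 : m ≠ N := by omega
        simp [hg1, hm1, h2]
    obtain ⟨q, s, hqs⟩ := ih _ hh
    refine ⟨q + Polynomial.C Q ^ N * Polynomial.C a * Polynomial.X ^ N, s, ?_⟩
    have expand : Polynomial.C Q ^ (N + 1) * g =
        Polynomial.C Q ^ N * (Polynomial.C Q * g - Polynomial.C a * Polynomial.X ^ N * L) +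
          Polynomial.C Q ^ N * (Polynomial.C a * Polynomial.X ^ N * L) := by ring
    rw [expand, hqs]; ring

lemma cubicW_finSuccEquiv {k : Type*} [Field k] :
    finSuccEquiv k 6 (cubicW k) =
      Polynomial.C (auxQ k) * Polynomial.X + Polynomial.C (auxR k) := by
  have h1 : (1 : Fin 7) = Fin.succ 0 := rfl
  have h2 : (2 : Fin 7) = Fin.succ 1 := rfl
  have h3 : (3 : Fin 7) = Fin.succ 2 := rfl
  have h4 : (4 : Fin 7) = Fin.succ 3 := rfl
  have h5 : (5 : Fin 7) = Fin.succ 4 := rfl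
  have h6 : (6 : Fin 7) = Fin.succ 5 := rfl
  rw [cubicW, h1, h2, h3, h4, h5, h6]
  simp only [map_sub, map_add, map_mul, map_pow, map_ofNat, finSuccEquiv_X_zero,
    finSuccEquiv_X_succ, auxQ, auxR]
  ring

lemma cubicW_irreducible {k : Type*} [Field k] : Irreducible (cubicW k) := by
  set e := finSuccEquiv k 6 with he
  set L : Polynomial (MvPolynomial (Fin 6) k) :=
    Polynomial.C (auxQ k) * Polynomial.X + Polynomial.C (auxR k) with hLdef
  have hFe : e (cubicW k) = L := cubicW_finSuccEquiv
  have hL1 : L.natDegree = 1 := Polynomial.natDegree_linear auxQ_ne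
  have hLne : L ≠ 0 := fun h => by simp [h] at hL1
  have key : ∀ u v : Polynomial (MvPolynomial (Fin 6) k), L = u * v → u.natDegree = 0 →
      IsUnit u := by
    intro u v huv hu
    have hu' : u = Polynomial.C (u.coeff 0) := Polynomial.eq_C_of_natDegree_eq_zero hu
    have hdvd : Polynomial.C (u.coeff 0) ∣ L := by rw [← hu', huv]; exact ⟨v, rfl⟩
    have hcoeff := (Polynomial.C_dvd_iff_dvd_coeff _ _).mp hdvd
    have hQd : u.coeff 0 ∣ auxQ k := by
      have := hcoeff 1
      simpa [hLdef] using this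
    have hRd : u.coeff 0 ∣ auxR k := by
      have := hcoeff 0
      simpa [hLdef] using this
    have := aux_relprime _ hQd hRd
    rw [hu']
    exact this.map (Polynomial.C : _ →+* _)
  constructor
  · intro hunit
    have : IsUnit L := by
      rw [← hFe]
      exact hunit.map e.toRingEquiv.toRingHom
    have := Polynomial.natDegree_eq_zero_of_isUnit this
    omega
  · intro a b hab
    have hLab : L = e a * e b := by rw [← hFe, hab, map_mul]
    have ha0 : e a ≠ 0 := by
      intro h; rw [h, zero_mul] at hLab; exact hLne hLab
    have hb0 : e b ≠ 0 := by
      intro h; rw [h, mul_zero] at hLab; exact hLne hLab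
    have hdeg : (e a).natDegree + (e b).natDegree = 1 := by
      rw [← Polynomial.natDegree_mul ha0 hb0, ← hLab, hL1]
    rcases Nat.eq_zero_or_pos (e a).natDegree with h | h
    · left
      have := key _ _ hLab h
      have h2 := this.map e.symm.toRingEquiv.toRingHom
      simpa using h2
    · right
      have hb : (e b).natDegree = 0 := by omega
      have := key _ _ (by rw [hLab]; ring) hb
      have h2 := this.map e.symm.toRingEquiv.toRingHom
      simpa using h2

/-- `RS` is `auxR` with `ξ = 1` (used for the rational parametrization). -/
noncomputable def auxRS (k : Type*) [Field k] : MvPolynomial (Fin 6) k :=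
  X 3 - X 0 ^ 2 * X 3 + X 0 * X 2 * X 4 - X 4 ^ 2 * X 1

noncomputable def phiW (k : Type*) [Field k] : Fin 7 → MvPolynomial (Fin 6) k :=
  ![ -(X 5 * auxRS k), X 5 * auxQ k * X 0, X 5 * auxQ k * X 1, X 5 * auxQ k * X 2,
     X 5 * auxQ k * X 3, X 5 * auxQ k * X 4, X 5 * auxQ k ]

lemma phiW_0 {k : Type*} [Field k] : phiW k 0 = -(X 5 * auxRS k) := rfl
lemma phiW_1 {k : Type*} [Field k] : phiW k 1 = X 5 * auxQ k * X 0 := rfl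
lemma phiW_2 {k : Type*} [Field k] : phiW k 2 = X 5 * auxQ k * X 1 := rfl
lemma phiW_3 {k : Type*} [Field k] : phiW k 3 = X 5 * auxQ k * X 2 := rfl
lemma phiW_4 {k : Type*} [Field k] : phiW k 4 = X 5 * auxQ k * X 3 := rfl
lemma phiW_5 {k : Type*} [Field k] : phiW k 5 = X 5 * auxQ k * X 4 := rfl
lemma phiW_6 {k : Type*} [Field k] : phiW k 6 = X 5 * auxQ k := rfl

theorem stmt_16 {k : Type*} [Field k] [Infinite k] :
    let F := cubicW k
    let p : Fin 7 → k := fun i => if i = 0 then 1 else 0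
    let G : MvPolynomial (Fin 6) k :=
      MvPolynomial.aeval (Fin.cases 1 fun i : Fin 6 => X i) F
    eval p F = 0 ∧
      (homogeneousComponent 0 G = 0 ∧ homogeneousComponent 1 G = 0 ∧
        homogeneousComponent 2 G ≠ 0) ∧
      (∃ φ : Fin 7 → MvPolynomial (Fin 6) k,
        (∀ v : Fin 6 → k, eval (fun i => eval v (φ i)) F = 0) ∧
        ∃ h : MvPolynomial (Fin 6) k, h ≠ 0 ∧
          ∀ v w : Fin 6 → k, eval v h ≠ 0 → eval w h ≠ 0 →
            (∀ i, eval v (φ i) = eval w (φ i)) → v = w) ∧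
      (∀ G' : MvPolynomial (Fin 7) k,
        (∀ x : Fin 7 → k, eval x F = 0 → eval x G' = 0) →
          G' ∈ (Ideal.span ({F} : Set (MvPolynomial (Fin 7) k))).radical) := by
  intro F p G
  have h1 : (1 : Fin 7) = Fin.succ 0 := rfl
  have h2 : (2 : Fin 7) = Fin.succ 1 := rfl
  have h3 : (3 : Fin 7) = Fin.succ 2 := rfl
  have h4 : (4 : Fin 7) = Fin.succ 3 := rfl
  have h5 : (5 : Fin 7) = Fin.succ 4 := rfl
  have h6 : (6 : Fin 7) = Fin.succ 5 := rfl
  -- G = auxQ + auxR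
  have hG : G = auxQ k + auxR k := by
    show MvPolynomial.aeval (Fin.cases 1 fun i : Fin 6 => X i) (cubicW k) = _
    rw [cubicW, h1, h2, h3, h4, h5, h6]
    simp only [map_sub, map_add, map_mul, map_pow, map_ofNat, aeval_X,
      Fin.cases_zero, Fin.cases_succ, auxQ, auxR]
    ring
  have hQhom : (auxQ k).IsHomogeneous 2 := by
    have h : (auxQ k) = C (4:k) * X 1 * X 3 - X 2 ^ 2 := by
      rw [auxQ, (map_ofNat C 4 : (C (4:k) : MvPolynomial (Fin 6) k) = 4)]
    rw [h]
    exact (((isHomogeneous_C _ _).mul (isHomogeneous_X _ _)).mul (isHomogeneous_X _ _)).sub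
      ((isHomogeneous_X _ _).pow 2)
  have hRhom : (auxR k).IsHomogeneous 3 := by
    rw [auxR]
    exact ((((isHomogeneous_X _ _).pow 2|>.mul (isHomogeneous_X _ _)).sub
      ((isHomogeneous_X _ _).pow 2|>.mul (isHomogeneous_X _ _))).add
      (((isHomogeneous_X _ _).mul (isHomogeneous_X _ _)).mul (isHomogeneous_X _ _))).sub
      ((isHomogeneous_X _ _).pow 2|>.mul (isHomogeneous_X _ _))
  have hQmem : auxQ k ∈ homogeneousSubmodule (Fin 6) k 2 :=
    (mem_homogeneousSubmodule 2 (auxQ k)).mpr hQhom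
  have hRmem : auxR k ∈ homogeneousSubmodule (Fin 6) k 3 :=
    (mem_homogeneousSubmodule 3 (auxR k)).mpr hRhom
  refine ⟨?_, ⟨?_, ?_, ?_⟩, ?_, ?_⟩
  · -- p lies on W
    show eval p (cubicW k) = 0
    simp [cubicW, p]
  · rw [hG, map_add, homogeneousComponent_of_mem hQmem, homogeneousComponent_of_mem hRmem]
    norm_num
  · rw [hG, map_add, homogeneousComponent_of_mem hQmem, homogeneousComponent_of_mem hRmem]
    norm_num
  · rw [hG, map_add, homogeneousComponent_of_mem hQmem, homogeneousComponent_of_mem hRmem]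
    norm_num
    exact auxQ_ne
  · -- rational parametrization
    refine ⟨phiW k, ?_, X 5 * auxQ k, ?_, ?_⟩
    · intro v
      show eval _ (cubicW k) = 0
      simp only [cubicW, map_sub, map_add, map_mul, map_pow, map_neg, map_ofNat, eval_X,
        phiW_0, phiW_1, phiW_2, phiW_3, phiW_4, phiW_5, phiW_6, auxQ, auxRS]
      ring
    · intro h
      have := congrArg (eval (fun i => if i = 2 then (1:k) else if i = 5 then 1 else 0)) h
      simp [auxQ] at this
    · intro v w hv hw h
      have hvq : v 5 * eval v (auxQ k) ≠ 0 := by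
        simpa using hv
      have e6 : v 5 * eval v (auxQ k) = w 5 * eval w (auxQ k) := by
        simpa [phiW_6] using h 6
      have cancel : ∀ x y : k, v 5 * eval v (auxQ k) * x = w 5 * eval w (auxQ k) * y → x = y := by
        intro x y hxy
        apply mul_left_cancel₀ hvq
        rw [hxy, ← e6]
      have e0 : v 0 = w 0 := cancel _ _ (by simpa [phiW_1] using h 1)
      have e1 : v 1 = w 1 := cancel _ _ (by simpa [phiW_2] using h 2)
      have e2 : v 2 = w 2 := cancel _ _ (by simpa [phiW_3] using h 3)
      have e3 : v 3 = w 3 := cancel _ _ (by simpa [phiW_4] using h 4)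
      have e4 : v 4 = w 4 := cancel _ _ (by simpa [phiW_5] using h 5)
      have hq : eval v (auxQ k) = eval w (auxQ k) := by
        simp only [auxQ, map_sub, map_mul, map_pow, map_ofNat, eval_X, e1, e2, e3]
      have hqne : eval v (auxQ k) ≠ 0 := right_ne_zero_of_mul hvq
      have e5' : v 5 = w 5 := by
        apply mul_right_cancel₀ hqne
        rw [e6, hq]
      funext i
      fin_cases i <;> assumption
  · -- density
    intro G' hvan
    set e := finSuccEquiv k 6 with he
    set g := e G' with hg
    obtain ⟨q, s, hqs⟩ := pdiv (auxQ k) (auxR k) g.natDegree g le_rfl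
    have hs : ∀ v : Fin 6 → k, eval v (auxQ k) ≠ 0 → eval v s = 0 := by
      intro v hv
      set a := - eval v (auxR k) / eval v (auxQ k) with hadef
      have hLa : eval v (auxQ k) * a + eval v (auxR k) = 0 := by
        rw [hadef]
        field_simp
        ring
      have hF0 : eval (Fin.cons a v) (cubicW k) = 0 := by
        rw [eval_eq_eval_mv_eval', cubicW_finSuccEquiv]
        simpa using hLa
      have hG0 : Polynomial.eval a (Polynomial.map (eval v) g) = 0 := by
        rw [hg, ← eval_eq_eval_mv_eval']
        exact hvan _ hF0
      have hev := congrArg (fun P => Polynomial.eval a (Polynomial.map (eval v) P)) hqs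
      simp only [Polynomial.map_mul, Polynomial.map_add, Polynomial.map_pow, Polynomial.map_C,
        Polynomial.map_X, Polynomial.eval_mul, Polynomial.eval_add, Polynomial.eval_pow,
        Polynomial.eval_C, Polynomial.eval_X, hG0, mul_zero] at hev
      rw [hLa] at hev
      simpa using hev.symm
    have hsQ : s * auxQ k = 0 := by
      apply MvPolynomial.funext
      intro v
      by_cases hv : eval v (auxQ k) = 0
      · simp [hv]
      · simp [hs v hv]
    have hs0 : s = 0 := by
      rcases mul_eq_zero.mp hsQ with h | h
      · exact h
      · exact absurd h auxQ_ne
    rw [hs0, map_zero, add_zero] at hqs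
    have hfact : e.symm (Polynomial.C (auxQ k)) ^ g.natDegree * G' = e.symm q * cubicW k := by
      have := congrArg e.symm hqs
      rw [← cubicW_finSuccEquiv] at this
      simpa [hg, map_mul, map_pow, he] using this
    have hdvd : cubicW k ∣ e.symm (Polynomial.C (auxQ k)) ^ g.natDegree * G' :=
      ⟨e.symm q, by rw [hfact]; ring⟩
    have hFprime : Prime (cubicW k) :=
      (UniqueFactorizationMonoid.irreducible_iff_prime).mp cubicW_irreducible
    rcases hFprime.2.2 _ _ hdvd with h | h
    · exfalso
      have hdC : cubicW k ∣ e.symm (Polynomial.C (auxQ k)) := hFprime.dvd_of_dvd_pow h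
      have : e (cubicW k) ∣ Polynomial.C (auxQ k) := by
        have := map_dvd e.toRingEquiv.toRingHom hdC
        simpa using this
      rw [cubicW_finSuccEquiv] at this
      have hne : (Polynomial.C (auxQ k) : Polynomial (MvPolynomial (Fin 6) k)) ≠ 0 :=
        fun hc => auxQ_ne (by simpa using hc)
      have hle := Polynomial.natDegree_le_of_dvd this hne
      rw [Polynomial.natDegree_linear auxQ_ne, Polynomial.natDegree_C] at hle
      omega
    · exact Ideal.le_radical (Ideal.mem_span_singleton.mpr h)
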